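/- Let N be a normal subgroup of a finite group G with N ⊆ Z(G). If d(G) = d(G/N), then Z(G/N) = Z(G)/N. -/

import Mathlib

theorem center_quotient_eq_of_commProb_eq
    (G : Type*) [Group G] [Finite G] (N : Subgroup G) [N.Normal]
    (hN : N ≤ Subgroup.center G) (h : commProb G = commProb (G ⧸ N)) :
    Subgroup.center (G ⧸ N) = (Subgroup.center G).map (QuotientGroup.mk' N) := by
  set Q := G ⧸ N
  set R : Set (Q × Q) := {p | Commute (Quotient.out p.1) (Quotient.out p.2)} with hR
  set S : Set (Q × Q) := {p | Commute p.1 p.2} with hS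
  have memN : ∀ x : G, (Quotient.out (QuotientGroup.mk (s := N) x))⁻¹ * x ∈ N := by
    intro x
    exact QuotientGroup.eq.mp (QuotientGroup.out_eq' (QuotientGroup.mk (s := N) x))
  have hcent : ∀ z ∈ N, ∀ g : G, Commute z g := fun z hz g =>
    (Subgroup.mem_center_iff.mp (hN hz) g).symm
  -- bijection
  have e : { p : G × G // Commute p.1 p.2 } ≃ R × N × N := by
    refine ⟨fun p => ⟨⟨(QuotientGroup.mk p.1.1, QuotientGroup.mk p.1.2), ?_⟩,
        ⟨_, memN p.1.1⟩, ⟨_, memN p.1.2⟩⟩, fun t =>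
        ⟨(Quotient.out t.1.1.1 * t.2.1, Quotient.out t.1.1.2 * t.2.2), ?_⟩, ?_, ?_⟩
    · obtain ⟨⟨x, y⟩, hxy⟩ := p
      have hxy' : Commute x y := hxy
      show Commute (Quotient.out (QuotientGroup.mk (s := N) x))
        (Quotient.out (QuotientGroup.mk (s := N) y))
      have hx : Quotient.out (QuotientGroup.mk (s := N) x)
          = x * ((Quotient.out (QuotientGroup.mk (s := N) x))⁻¹ * x)⁻¹ := by group
      have hy : Quotient.out (QuotientGroup.mk (s := N) y)
          = y * ((Quotient.out (QuotientGroup.mk (s := N) y))⁻¹ * y)⁻¹ := by group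
      rw [hx, hy]
      exact (hxy'.mul_right (hcent _ (N.inv_mem (memN y)) x).symm).mul_left
        (hcent _ (N.inv_mem (memN x)) _)
    · obtain ⟨⟨⟨a, b⟩, hab⟩, ⟨n, hn⟩, ⟨m, hm⟩⟩ := t
      have hab' : Commute (Quotient.out a) (Quotient.out b) := hab
      exact (hab'.mul_right (hcent m hm _).symm).mul_left (hcent n hn _)
    · rintro ⟨⟨x, y⟩, hxy⟩
      exact Subtype.ext (Prod.ext (mul_inv_cancel_left _ _) (mul_inv_cancel_left _ _))
    · rintro ⟨⟨⟨a, b⟩, hab⟩, ⟨n, hn⟩, ⟨m, hm⟩⟩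
      have ha : QuotientGroup.mk (s := N) (Quotient.out a * n) = a := by
        rw [QuotientGroup.mk_mul, (QuotientGroup.eq_one_iff n).mpr hn, mul_one,
          QuotientGroup.out_eq']
      have hb : QuotientGroup.mk (s := N) (Quotient.out b * m) = b := by
        rw [QuotientGroup.mk_mul, (QuotientGroup.eq_one_iff m).mpr hm, mul_one,
          QuotientGroup.out_eq']
      refine Prod.ext (Subtype.ext (Prod.ext ha hb)) (Prod.ext (Subtype.ext ?_) (Subtype.ext ?_))
      · show (Quotient.out (QuotientGroup.mk (s := N) (Quotient.out a * n)))⁻¹ *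
          (Quotient.out a * n) = n
        rw [ha, inv_mul_cancel_left]
      · show (Quotient.out (QuotientGroup.mk (s := N) (Quotient.out b * m)))⁻¹ *
          (Quotient.out b * m) = m
        rw [hb, inv_mul_cancel_left]
  -- counting
  have hcardG : Nat.card { p : G × G // Commute p.1 p.2 } = Nat.card R * Nat.card N ^ 2 := by
    rw [Nat.card_congr e, Nat.card_prod, Nat.card_prod, sq]
  have hG : Nat.card G = Nat.card Q * Nat.card N := Subgroup.card_eq_card_quotient_mul_card_subgroup N
  have hQ0 : (Nat.card Q : ℚ) ≠ 0 := Nat.cast_ne_zero.mpr Nat.card_pos.ne'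
  have hN0 : (Nat.card N : ℚ) ≠ 0 := Nat.cast_ne_zero.mpr Nat.card_pos.ne'
  have hSQ : Nat.card { p : Q × Q // Commute p.1 p.2 } = Nat.card S := rfl
  have hcard : Nat.card R = Nat.card S := by
    have e1 : commProb G = (Nat.card R : ℚ) / (Nat.card Q : ℚ) ^ 2 := by
      rw [commProb_def, hcardG, hG]
      push_cast
      field_simp
    have e2 : (Nat.card R : ℚ) / (Nat.card Q : ℚ) ^ 2
        = (Nat.card S : ℚ) / (Nat.card Q : ℚ) ^ 2 := by
      rw [← e1, h, commProb_def, hSQ]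
    field_simp at e2
    exact_mod_cast e2
  have hRS : R = S := by
    have hsub : R ⊆ S := by
      rintro ⟨a, b⟩ hp
      have hp' : Commute (Quotient.out a) (Quotient.out b) := hp
      have := hp'.map (QuotientGroup.mk' N)
      simpa only [hS, Set.mem_setOf_eq, QuotientGroup.mk'_apply, QuotientGroup.out_eq'] using this
    apply Set.eq_of_subset_of_ncard_le hsub _ (Set.toFinite S)
    rw [← Nat.card_coe_set_eq, ← Nat.card_coe_set_eq, hcard]
  -- conclude
  ext a
  simp only [Subgroup.mem_map, QuotientGroup.mk'_apply]
  constructor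
  · intro ha
    refine ⟨Quotient.out a, Subgroup.mem_center_iff.mpr fun g => ?_, QuotientGroup.out_eq' a⟩
    have hmem : ((a, QuotientGroup.mk (s := N) g) : Q × Q) ∈ S := by
      simp only [hS, Set.mem_setOf_eq]
      exact (Subgroup.mem_center_iff.mp ha _).symm
    rw [← hRS] at hmem
    have hout : Commute (Quotient.out a) (Quotient.out (QuotientGroup.mk (s := N) g)) := hmem
    have hg : g = Quotient.out (QuotientGroup.mk (s := N) g) *
        ((Quotient.out (QuotientGroup.mk (s := N) g))⁻¹ * g) := by group
    calc g * Quotient.out a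
        = Quotient.out (QuotientGroup.mk (s := N) g) *
          ((Quotient.out (QuotientGroup.mk (s := N) g))⁻¹ * g) * Quotient.out a := by rw [← hg]
      _ = Quotient.out a * g := by
          rw [mul_assoc, (hcent _ (memN g) (Quotient.out a)), ← mul_assoc, ← hout.eq,
            mul_assoc, ← hg]
  · rintro ⟨z, hz, rfl⟩
    refine Subgroup.mem_center_iff.mpr fun b => ?_
    induction b using QuotientGroup.induction_on with
    | H g =>
      rw [← QuotientGroup.mk_mul, ← QuotientGroup.mk_mul,
        Subgroup.mem_center_iff.mp hz g]
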